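/- arXiv:1811.01651 — 2 statements merged into one kernel-verified Lean document; each statement's English description precedes it below -/
import Mathlib

section
/- Let p and q be real numbers with 0 ≤ p ≤ 1 and 0 ≤ q ≤ 1. Consider the probability distribution on Bool obtained by first sampling t from a Bernoulli distribution with success probability p, and then outputting true with probability 1 − q/2 if t = true and with probability 1/2 − q/2 if t = false. Then the probability of outputting true equals 1/2 + (p − q)/2. Consequently, for any real ε > 0: if p ≥ q + ε then the probability of outputting true is at least 1/2 + ε/2, and if p ≤ q − ε then the probability of outputting false is at least 1/2 + ε/2. -/
theorem stmt_5 (p q : ℝ) (hp0 : 0 ≤ p) (hp1 : p ≤ 1) (hq0 : 0 ≤ q) (hq1 : q ≤ 1)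
    (μ : PMF Bool)
    (hμ : μ = (PMF.bernoulli (Real.toNNReal p)
        (by rw [Real.toNNReal_le_one]; exact hp1)).bind
      (fun t => PMF.bernoulli
        (Real.toNNReal (if t then 1 - q / 2 else 1 / 2 - q / 2))
        (by rw [Real.toNNReal_le_one]; cases t <;> simp <;> linarith))) :
    μ true = ENNReal.ofReal (1 / 2 + (p - q) / 2) ∧
    ∀ ε : ℝ, 0 < ε →
      (p ≥ q + ε → ENNReal.ofReal (1 / 2 + ε / 2) ≤ μ true) ∧
      (p ≤ q - ε → ENNReal.ofReal (1 / 2 + ε / 2) ≤ μ false) := by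
  have h1p : (1 : ENNReal) - ENNReal.ofReal p = ENNReal.ofReal (1 - p) := by
    rw [← ENNReal.ofReal_one, ← ENNReal.ofReal_sub _ hp0]
  have htrue : μ true = ENNReal.ofReal (1 / 2 + (p - q) / 2) := by
    rw [hμ, PMF.bind_apply, tsum_bool]
    simp only [PMF.bernoulli_apply, if_true, if_false, cond_true, cond_false, Bool.false_eq_true]
    simp only [ENNReal.coe_sub, ENNReal.coe_one, show ∀ x : ℝ, ((Real.toNNReal x : NNReal) : ENNReal) = ENNReal.ofReal x from fun _ => rfl]
    rw [h1p, ← ENNReal.ofReal_mul (by linarith), ← ENNReal.ofReal_mul hp0,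
      ← ENNReal.ofReal_add (by nlinarith) (by nlinarith)]
    ring_nf
  have hfalse : μ false = ENNReal.ofReal (1 / 2 + (q - p) / 2) := by
    rw [hμ, PMF.bind_apply, tsum_bool]
    simp only [PMF.bernoulli_apply, if_true, if_false, cond_true, cond_false, Bool.false_eq_true]
    simp only [ENNReal.coe_sub, ENNReal.coe_one, show ∀ x : ℝ, ((Real.toNNReal x : NNReal) : ENNReal) = ENNReal.ofReal x from fun _ => rfl]
    have e1 : (1 : ENNReal) - ENNReal.ofReal (1 / 2 - q / 2) = ENNReal.ofReal (1 / 2 + q / 2) := by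
      rw [← ENNReal.ofReal_one, ← ENNReal.ofReal_sub _ (by linarith)]
      ring_nf
    have e2 : (1 : ENNReal) - ENNReal.ofReal (1 - q / 2) = ENNReal.ofReal (q / 2) := by
      rw [← ENNReal.ofReal_one, ← ENNReal.ofReal_sub _ (by linarith)]
      ring_nf
    rw [h1p, e1, e2, ← ENNReal.ofReal_mul (by linarith), ← ENNReal.ofReal_mul hp0,
      ← ENNReal.ofReal_add (by nlinarith) (by nlinarith)]
    ring_nf
  refine ⟨htrue, fun ε hε => ⟨fun h => ?_, fun h => ?_⟩⟩
  · rw [htrue]; exact ENNReal.ofReal_le_ofReal (by linarith)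
  · rw [hfalse]; exact ENNReal.ofReal_le_ofReal (by linarith)
end

section
/- Let p be a real number with 0 ≤ p ≤ 1, and let μ_p be the probability distribution on Bool × Bool obtained as follows: sample r uniformly from Bool; independently sample t from a Bernoulli distribution with success probability p; then sample s from a Bernoulli distribution whose success probability is 1 if (r, t) = (true, true), 0 if (r, t) = (false, true), and 1/2 if t = false; output the pair (r, s). Then μ_p assigns probability 1/4 + p/4 to the event { (r, s) | r = true and s = true }. Consequently, since μ_p assigns probability 1/2 to { (r, s) | s = true }, the conditional probability of r = true given s = true equals 1/2 + p/2. -/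
theorem stmt_7 (p : ℝ) (hp0 : 0 ≤ p) (hp1 : p ≤ 1)
    (μ : PMF (Bool × Bool))
    (hμ : μ = (PMF.bernoulli (1 / 2) (by norm_num)).bind (fun r =>
      (PMF.bernoulli (Real.toNNReal p)
          (by rw [Real.toNNReal_le_one]; exact hp1)).bind (fun t =>
        (PMF.bernoulli (if t then (if r then 1 else 0) else 1 / 2)
            (by cases t <;> cases r <;> simp [ENNReal.half_le_self])).map (fun s => (r, s))))) :
    μ.toOuterMeasure {x : Bool × Bool | x.1 = true ∧ x.2 = true}
        = ENNReal.ofReal (1 / 4 + p / 4) ∧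
    μ.toOuterMeasure {x : Bool × Bool | x.1 = true ∧ x.2 = true} /
        μ.toOuterMeasure {x : Bool × Bool | x.2 = true}
        = ENNReal.ofReal (1 / 2 + p / 2) := by
  have h1 : (1:ENNReal) - ENNReal.ofReal p = ENNReal.ofReal (1-p) := by
    rw [← ENNReal.ofReal_one, ← ENNReal.ofReal_sub _ hp0]
  have h2 : (2⁻¹:ENNReal) = ENNReal.ofReal 2⁻¹ := by simp [ENNReal.ofReal_inv_of_pos]
  have htt : μ (true, true) = ENNReal.ofReal (1/4 + p/4) := by
    subst hμ
    simp [PMF.bind_apply, PMF.map_apply, PMF.bernoulli_apply, tsum_bool, Prod.ext_iff]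
    rw [show ((p.toNNReal : NNReal) : ENNReal) = ENNReal.ofReal p from rfl]
    rw [h1, h2, ← ENNReal.ofReal_mul (by linarith), ← ENNReal.ofReal_add hp0 (by linarith),
        ← ENNReal.ofReal_mul (by norm_num)]
    congr 1; ring
  have hft : μ (false, true) = ENNReal.ofReal ((1-p)/4) := by
    subst hμ
    simp [PMF.bind_apply, PMF.map_apply, PMF.bernoulli_apply, tsum_bool, Prod.ext_iff]
    rw [show ((p.toNNReal : NNReal) : ENNReal) = ENNReal.ofReal p from rfl]
    rw [h1, h2, ← ENNReal.ofReal_mul (by linarith), ← ENNReal.ofReal_mul (by norm_num)]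
    congr 1; ring
  have hs1 : μ.toOuterMeasure {x : Bool × Bool | x.1 = true ∧ x.2 = true}
      = ENNReal.ofReal (1 / 4 + p / 4) := by
    have : {x : Bool × Bool | x.1 = true ∧ x.2 = true} = {(true, true)} := by
      ext ⟨a, b⟩; simp [Prod.ext_iff, and_comm]
    rw [this, PMF.toOuterMeasure_apply_singleton, htt]
  have hs2 : μ.toOuterMeasure {x : Bool × Bool | x.2 = true} = ENNReal.ofReal (1/2) := by
    have : {x : Bool × Bool | x.2 = true} = {(true, true), (false, true)} := by
      ext ⟨a, b⟩; cases a <;> cases b <;> simp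
    rw [this, ← Set.singleton_union, PMF.toOuterMeasure_apply,
        tsum_eq_sum (s := {(true, true), (false, true)})]
    · rw [Finset.sum_insert (by simp), Finset.sum_singleton]
      simp only [Set.indicator_apply, Set.singleton_union]
      norm_num
      rw [htt, hft, ← ENNReal.ofReal_add (by linarith) (by linarith)]
      congr 1; ring
    · intro b hb
      apply Set.indicator_of_notMem
      simpa [and_comm] using hb
  refine ⟨hs1, ?_⟩
  rw [hs1, hs2, ← ENNReal.ofReal_div_of_pos (by norm_num)]
  congr 1; ring
end
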